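/- Let φ : ℝ → ℂ be a continuous, integrable, positive definite function, let τ_1, …, τ_m ∈ ℝ, let c_1, …, c_m ∈ ℂ, and let c₀ be a real number with c₀ ≥ 2·(|c_1| + ⋯ + |c_m|). Then the function u(x) = c₀·φ(x) + Σ_{j=1}^m ( c_j·φ(x − τ_j) + conj(c_j)·φ(x + τ_j) ) is positive definite on ℝ. -/

import Mathlib

open Complex MeasureTheory Set Pointwise ComplexOrder

noncomputable section

/-- `f : ℝ → ℂ` is positive definite. -/
def IsPosDefFn (f : ℝ → ℂ) : Prop :=
  ∀ (m : ℕ) (x : Fin m → ℝ) (c : Fin m → ℂ),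
    0 ≤ ∑ j, ∑ k, f (x j - x k) * c j * (starRingEnd ℂ) (c k)

/-- `f ∈ PD(ℝ)`: continuous, not identically zero, positive definite. -/
def MemPD (f : ℝ → ℂ) : Prop :=
  Continuous f ∧ (∃ x, f x ≠ 0) ∧ IsPosDefFn f

/-- The essential support `S_f`. -/
def essSupp (f : ℝ → ℂ) : Set ℝ := {x | f x ≠ 0}

/-- `D_n(f) = {g ∈ PD(ℝ) : g^n = f}`. -/
def Dset (n : ℕ) (f : ℝ → ℂ) : Set (ℝ → ℂ) :=
  {g | MemPD g ∧ ∀ x, g x ^ n = f x}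

/-- The set of connected components of `S ⊆ ℝ`. -/
def comps (S : Set ℝ) : Set (Set ℝ) :=
  {C | ∃ x ∈ S, C = connectedComponentIn S x}

lemma isPosDefFn_fintype {f : ℝ → ℂ} (h : IsPosDefFn f) {ι : Type} [Fintype ι]
    (x : ι → ℝ) (c : ι → ℂ) :
    0 ≤ ∑ j, ∑ k, f (x j - x k) * c j * (starRingEnd ℂ) (c k) := by
  let e := Fintype.equivFin ι
  have key := h (Fintype.card ι) (x ∘ e.symm) (c ∘ e.symm)
  refine le_of_le_of_eq key ?_
  exact Fintype.sum_equiv e.symm _ _ (fun j => Fintype.sum_equiv e.symm _ _ (fun k => rfl))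

lemma pd_add {f g : ℝ → ℂ} (hf : IsPosDefFn f) (hg : IsPosDefFn g) :
    IsPosDefFn (fun x => f x + g x) := by
  intro m x e
  simp_rw [add_mul]
  rw [show (∑ j, ∑ k, (f (x j - x k) * e j * (starRingEnd ℂ) (e k) +
      g (x j - x k) * e j * (starRingEnd ℂ) (e k)))
    = (∑ j, ∑ k, f (x j - x k) * e j * (starRingEnd ℂ) (e k)) +
      (∑ j, ∑ k, g (x j - x k) * e j * (starRingEnd ℂ) (e k)) by
    rw [← Finset.sum_add_distrib]; exact Finset.sum_congr rfl fun j _ => Finset.sum_add_distrib]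
  exact add_nonneg (hf m x e) (hg m x e)

lemma pd_smul {f : ℝ → ℂ} (r : ℝ) (hr : 0 ≤ r) (hf : IsPosDefFn f) :
    IsPosDefFn (fun x => (r : ℂ) * f x) := by
  intro m x e
  simp_rw [mul_assoc, ← Finset.mul_sum]
  have := hf m x e
  simp_rw [mul_assoc] at this
  exact mul_nonneg (by exact_mod_cast hr) this

lemma pd_sum {ι : Type} (s : Finset ι) (F : ι → ℝ → ℂ)
    (h : ∀ i ∈ s, IsPosDefFn (F i)) :
    IsPosDefFn (fun x => ∑ i ∈ s, F i x) := by
  intro m x e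
  have h1 : ∀ j, ∑ k, (∑ i ∈ s, F i (x j - x k)) * e j * (starRingEnd ℂ) (e k)
      = ∑ i ∈ s, ∑ k, F i (x j - x k) * e j * (starRingEnd ℂ) (e k) := by
    intro j; simp_rw [Finset.sum_mul]; exact Finset.sum_comm
  simp_rw [h1]
  rw [Finset.sum_comm]
  exact Finset.sum_nonneg fun i hi => h i hi m x e

lemma pd_pair {φ : ℝ → ℂ} (hpd : IsPosDefFn φ) (c : ℂ) (τ : ℝ) :
    IsPosDefFn (fun x => 2 * (‖c‖ : ℂ) * φ x
      + (c * φ (x - τ) + (starRingEnd ℂ) c * φ (x + τ))) := by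
  intro m x e
  set s : ℝ := Real.sqrt (‖c‖) with hs
  set d : Fin 2 → ℂ := ![c / s, (s : ℂ)] with hd
  set t : Fin 2 → ℝ := ![0, -τ] with ht
  have hss : (s : ℝ) * s = ‖c‖ := Real.mul_self_sqrt (norm_nonneg c)
  have hd01 : d 0 * (starRingEnd ℂ) (d 1) = c := by
    simp only [hd, Matrix.cons_val_zero, Matrix.cons_val_one, Matrix.head_cons,
      Complex.conj_ofReal]
    rcases eq_or_ne c 0 with h0 | h0
    · simp [h0]
    · have hs0 : (s : ℂ) ≠ 0 := by
        simp only [ne_eq, Complex.ofReal_eq_zero]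
        intro h; rw [hs] at h
        exact h0 (norm_eq_zero.mp (by nlinarith [Real.sq_sqrt (norm_nonneg c)]))
      field_simp
  have hd10 : d 1 * (starRingEnd ℂ) (d 0) = (starRingEnd ℂ) c := by
    have := congrArg (starRingEnd ℂ) hd01
    simp only [map_mul, RingHom.id_apply, Complex.conj_conj] at this
    rw [← this]; ring
  have hd00 : d 0 * (starRingEnd ℂ) (d 0) = (‖c‖ : ℂ) := by
    simp only [hd, Matrix.cons_val_zero, map_div₀, Complex.conj_ofReal]
    rw [div_mul_div_comm, Complex.mul_conj]
    rcases eq_or_ne c 0 with h0 | h0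
    · simp [h0]
    · have : (s : ℂ) * s = (‖c‖ : ℂ) := by exact_mod_cast hss
      rw [this, Complex.normSq_eq_norm_sq]
      have habs : (‖c‖ : ℂ) ≠ 0 := by
        simp [norm_eq_zero, h0]
      field_simp
      norm_cast
  have hd11 : d 1 * (starRingEnd ℂ) (d 1) = (‖c‖ : ℂ) := by
    simp only [hd, Matrix.cons_val_one, Matrix.head_cons, Matrix.cons_val_zero, Complex.conj_ofReal]
    exact_mod_cast congrArg (Complex.ofReal) hss
  have key := isPosDefFn_fintype hpd (ι := Fin m × Fin 2)
      (fun p => x p.1 - t p.2) (fun p => e p.1 * d p.2)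
  refine le_of_le_of_eq key ?_
  simp_rw [Fintype.sum_prod_type]
  refine Finset.sum_congr rfl fun j _ => ?_
  rw [Finset.sum_comm]
  refine Finset.sum_congr rfl fun k _ => ?_
  simp only [Fin.sum_univ_two, ht, Matrix.cons_val_zero, Matrix.cons_val_one, Matrix.head_cons,
    map_mul]
  rw [show x j - 0 - (x k - 0) = x j - x k by ring,
    show x j - 0 - (x k - -τ) = x j - x k - τ by ring,
    show x j - -τ - (x k - 0) = x j - x k + τ by ring,
    show x j - -τ - (x k - -τ) = x j - x k by ring]
  linear_combination (φ (x j - x k) * e j * (starRingEnd ℂ) (e k)) * hd00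
    + (φ (x j - x k) * e j * (starRingEnd ℂ) (e k)) * hd11
    + (φ (x j - x k - τ) * e j * (starRingEnd ℂ) (e k)) * hd01
    + (φ (x j - x k + τ) * e j * (starRingEnd ℂ) (e k)) * hd10
theorem posDef_of_translates (φ : ℝ → ℂ) (hcont : Continuous φ)
    (hint : Integrable φ) (hpd : IsPosDefFn φ)
    (m : ℕ) (τ : Fin m → ℝ) (c : Fin m → ℂ) (c₀ : ℝ)
    (hc₀ : 2 * ∑ j, ‖c j‖ ≤ c₀) :
    IsPosDefFn (fun x => (c₀ : ℂ) * φ x +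
      ∑ j, (c j * φ (x - τ j) + (starRingEnd ℂ) (c j) * φ (x + τ j))) := by
  have key : (fun x => (c₀ : ℂ) * φ x +
      ∑ j, (c j * φ (x - τ j) + (starRingEnd ℂ) (c j) * φ (x + τ j)))
      = fun x => ((c₀ - 2 * ∑ j, ‖c j‖ : ℝ) : ℂ) * φ x +
        ∑ j, (2 * (‖c j‖ : ℂ) * φ x +
          (c j * φ (x - τ j) + (starRingEnd ℂ) (c j) * φ (x + τ j))) := by
    funext x
    push_cast
    simp only [Finset.sum_add_distrib, ← Finset.sum_mul, ← Finset.mul_sum]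
    ring
  rw [key]
  exact pd_add (pd_smul _ (by linarith) hpd)
    (pd_sum Finset.univ _ fun j _ => pd_pair hpd (c j) (τ j))
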